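/- For a finite nonempty set A in an abelian group G and any real T ≥ 2, one has E_*[A] ≤ D[A], i.e., for every partition A = X ⊔ Y into disjoint sets one has |X|²|Y|² / (|A|·E(X,Y)) ≤ |A+A|/|A| (with the convention that the left side is interpreted as 0 when X or Y is empty). -/
import Mathlib


open Finset Pointwise

/-- Common additive energy: quadruples (a₁,a₂,b₁,b₂) ∈ A×A×B×B with a₁ - b₁ = a₂ - b₂. -/
def addE {G : Type*} [AddCommGroup G] [DecidableEq G] (A B : Finset G) : ℕ :=
  (((A ×ˢ A) ×ˢ B ×ˢ B).filter fun x => x.1.1 - x.2.1 = x.1.2 - x.2.2).card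

lemma addE_eq_addEnergy {G : Type*} [AddCommGroup G] [DecidableEq G] (A B : Finset G) :
    addE A B = Finset.addEnergy A B := by
  rw [addE, Finset.addEnergy]
  apply Finset.card_bij (fun x _ => (x.1, (x.2.2, x.2.1)))
  · rintro ⟨⟨a₁, a₂⟩, b₁, b₂⟩ h
    simp only [Finset.mem_filter, Finset.mem_product] at h ⊢
    obtain ⟨⟨⟨ha₁, ha₂⟩, hb₁, hb₂⟩, heq⟩ := h
    refine ⟨⟨⟨ha₁, ha₂⟩, hb₂, hb₁⟩, ?_⟩
    exact sub_eq_sub_iff_add_eq_add.mp heq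
  · rintro ⟨⟨a₁, a₂⟩, b₁, b₂⟩ _ ⟨⟨c₁, c₂⟩, d₁, d₂⟩ _ h
    simp_all
  · rintro ⟨⟨a₁, a₂⟩, b₁, b₂⟩ h
    refine ⟨((a₁, a₂), (b₂, b₁)), ?_, rfl⟩
    simp only [Finset.mem_filter, Finset.mem_product] at h ⊢
    obtain ⟨⟨⟨ha₁, ha₂⟩, hb₁, hb₂⟩, heq⟩ := h
    refine ⟨⟨⟨ha₁, ha₂⟩, hb₂, hb₁⟩, ?_⟩
    exact sub_eq_sub_iff_add_eq_add.mpr heq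

theorem stmt_6 {G : Type*} [AddCommGroup G] [DecidableEq G] (A : Finset G)
    (hA : A.Nonempty) (T : ℝ) (hT : 2 ≤ T) :
    ∀ X Y : Finset G, X ∪ Y = A → Disjoint X Y →
      ((X.card : ℝ) ^ 2 * Y.card ^ 2) / (A.card * addE X Y)
        ≤ ((A + A).card : ℝ) / A.card := by
  intro X Y hXY _
  have hXA : X ⊆ A := hXY ▸ Finset.subset_union_left
  have hYA : Y ⊆ A := hXY ▸ Finset.subset_union_right
  rcases Nat.eq_zero_or_pos (addE X Y) with hE | hE
  · rw [hE]
    simp only [Nat.cast_zero, mul_zero, div_zero]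
    positivity
  · have hkey : (X.card : ℝ) ^ 2 * Y.card ^ 2 ≤ (A + A).card * addE X Y := by
      have h1 := Finset.le_card_add_mul_addEnergy X Y
      have h2 : (X + Y).card ≤ (A + A).card :=
        Finset.card_le_card (Finset.add_subset_add hXA hYA)
      have h3 : (X + Y).card * Finset.addEnergy X Y ≤ (A + A).card * Finset.addEnergy X Y :=
        Nat.mul_le_mul_right _ h2
      have := h1.trans h3
      rw [addE_eq_addEnergy]
      exact_mod_cast this
    rw [div_le_div_iff₀ (by positivity) (by exact_mod_cast hA.card_pos)]
    calc (X.card : ℝ) ^ 2 * Y.card ^ 2 * A.card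
        ≤ ((A + A).card * addE X Y) * A.card := by
          apply mul_le_mul_of_nonneg_right hkey (by positivity)
      _ = (A + A).card * (A.card * addE X Y) := by ring
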